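/- arXiv:1811.05500 — 5 statements merged into one kernel-verified Lean document; each statement's English description precedes it below -/
import Mathlib

section
/- If X_j is obtained from X_{j−1} by one ADI step, i.e., X_j = C(A,α)X_{j−1}C(A,α)* − 2Re(α)(A+αI)⁻¹BB*(A+αI)⁻*, then the residual R(X) := AX + XA* + BB* satisfies R(X_j) = C(A,α) R(X_{j−1}) C(A,α)*. -/
open Matrix

noncomputable def Cayley {n : ℕ} (A : Matrix (Fin n) (Fin n) ℂ) (α : ℂ) :
    Matrix (Fin n) (Fin n) ℂ :=
  (A - (starRingEnd ℂ α) • 1) * (A + α • 1)⁻¹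

lemma adi_aux {R : Type*} [Ring R] [Algebra ℂ R]
    (a a' m mi m' mi' nn n' x xnext p : R) (k : ℂ)
    (hm1 : m * mi = 1) (hm2 : mi * m = 1)
    (hm'1 : m' * mi' = 1) (hm'2 : mi' * m' = 1)
    (ham : a * m = m * a) (ham' : m' * a' = a' * m')
    (hmn : m * nn = nn * m) (hmn' : n' * m' = m' * n')
    (han : a * nn = nn * a) (han' : n' * a' = a' * n')
    (hp : m * p * m' - nn * p * n' = k • (a * p) + k • (p * a'))
    (hx : xnext = nn * mi * x * (mi' * n') - k • (mi * p * mi')) :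
    a * xnext + xnext * a' + p = (nn * mi) * (a * x + x * a' + p) * (mi' * n') := by
  have cancel : ∀ X Y : R, m * X * m' = m * Y * m' → X = Y := by
    intro X Y h
    calc X = mi * (m * X * m') * mi' := by
            rw [mul_assoc m X m', ← mul_assoc mi, hm2, one_mul, mul_assoc, hm'1, mul_one]
      _ = mi * (m * Y * m') * mi' := by rw [h]
      _ = Y := by
            rw [mul_assoc m Y m', ← mul_assoc mi, hm2, one_mul, mul_assoc, hm'1, mul_one]
  apply cancel
  have hconj : ∀ E : R, m * (nn * mi * E * (mi' * n')) * m' = nn * E * n' := by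
    intro E
    calc m * (nn * mi * E * (mi' * n')) * m'
        = (m * nn) * mi * E * (mi' * (n' * m')) := by
          simp only [mul_assoc]
      _ = (nn * m) * mi * E * (mi' * (m' * n')) := by rw [hmn, hmn']
      _ = nn * ((m * mi) * (E * ((mi' * m') * n'))) := by simp only [mul_assoc]
      _ = nn * E * n' := by rw [hm1, hm'2, one_mul, one_mul, mul_assoc]
  have hXm : m * xnext * m' = nn * x * n' - k • p := by
    rw [hx, mul_sub, sub_mul]
    have h2' : m * (k • (mi * p * mi')) * m' = k • p := by
      rw [mul_smul_comm, smul_mul_assoc]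
      congr 1
      calc m * (mi * p * mi') * m' = (m * mi) * (p * (mi' * m')) := by
            simp only [mul_assoc]
        _ = p := by rw [hm1, hm'2, one_mul, mul_one]
    rw [hconj, h2']
  have e1 : m * (a * xnext) * m' = a * (m * xnext * m') := by
    rw [← mul_assoc m a xnext, ← ham, mul_assoc a m xnext, mul_assoc a (m * xnext) m']
  have e2 : m * (xnext * a') * m' = (m * xnext * m') * a' := by
    rw [← mul_assoc m xnext a', mul_assoc (m * xnext) a' m', ← ham',
      ← mul_assoc (m * xnext) m' a']
  have f1 : a * (nn * x * n') = nn * (a * x) * n' := by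
    rw [← mul_assoc a (nn * x) n', ← mul_assoc a nn x, han, mul_assoc nn a x]
  have f2 : (nn * x * n') * a' = nn * (x * a') * n' := by
    rw [mul_assoc (nn * x) n' a', han', ← mul_assoc (nn * x) a' n', mul_assoc nn x a']
  have hfin : m * p * m' = nn * p * n' + (k • (a * p) + k • (p * a')) := by
    rw [← hp]; abel
  rw [hconj]
  simp only [mul_add, add_mul]
  rw [e1, e2, hXm]
  simp only [mul_sub, sub_mul, mul_smul_comm, smul_mul_assoc]
  rw [f1, f2, hfin]
  abel

theorem adi_step_residual {n s : ℕ} (A : Matrix (Fin n) (Fin n) ℂ)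
    (B : Matrix (Fin n) (Fin s) ℂ) (Xprev : Matrix (Fin n) (Fin n) ℂ) (α : ℂ)
    (hα : α.re < 0) (hinv : IsUnit (A + α • (1 : Matrix (Fin n) (Fin n) ℂ)))
    (hHerm : Xprev.IsHermitian)
    (R : Matrix (Fin n) (Fin n) ℂ → Matrix (Fin n) (Fin n) ℂ)
    (hR : ∀ X, R X = A * X + X * Aᴴ + B * Bᴴ)
    (Xnext : Matrix (Fin n) (Fin n) ℂ)
    (hstep : Xnext = Cayley A α * Xprev * (Cayley A α)ᴴ
      - ((2 * α.re : ℝ) : ℂ) • ((A + α • 1)⁻¹ * B * Bᴴ * ((A + α • 1)⁻¹)ᴴ)) :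
    R Xnext = Cayley A α * R Xprev * (Cayley A α)ᴴ := by
  set c : ℂ := starRingEnd ℂ α with hc
  set M : Matrix (Fin n) (Fin n) ℂ := A + α • 1 with hMdef
  set N : Matrix (Fin n) (Fin n) ℂ := A - c • 1 with hNdef
  set k : ℂ := ((2 * α.re : ℝ) : ℂ) with hkdef
  have hdet : IsUnit M.det := (Matrix.isUnit_iff_isUnit_det M).mp hinv
  have hdetH : IsUnit Mᴴ.det := by rw [Matrix.det_conjTranspose]; exact hdet.star
  have h1 : M * M⁻¹ = 1 := Matrix.mul_nonsing_inv M hdet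
  have h2 : M⁻¹ * M = 1 := Matrix.nonsing_inv_mul M hdet
  have h1H : Mᴴ * (Mᴴ)⁻¹ = 1 := Matrix.mul_nonsing_inv _ hdetH
  have h2H : (Mᴴ)⁻¹ * Mᴴ = 1 := Matrix.nonsing_inv_mul _ hdetH
  have hinvH : (M⁻¹)ᴴ = (Mᴴ)⁻¹ := Matrix.conjTranspose_nonsing_inv M
  have hAM : A * M = M * A := by
    simp [hMdef, mul_add, add_mul, mul_smul_comm, smul_mul_assoc]
  have hAMH : Mᴴ * Aᴴ = Aᴴ * Mᴴ := by
    have h := congrArg conjTranspose hAM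
    simpa [Matrix.conjTranspose_mul] using h
  have hAN : A * N = N * A := by
    simp [hNdef, mul_sub, sub_mul, mul_smul_comm, smul_mul_assoc]
  have hANH : Nᴴ * Aᴴ = Aᴴ * Nᴴ := by
    have h := congrArg conjTranspose hAN
    simpa [Matrix.conjTranspose_mul] using h
  have hMN : M * N = N * M := by
    simp only [hMdef, hNdef, mul_sub, sub_mul, add_mul, mul_add,
      mul_smul_comm, smul_mul_assoc, smul_smul, one_mul, mul_one, smul_sub, smul_add]
    all_goals rw [mul_comm α c]
    all_goals abel
  have hMNH : Nᴴ * Mᴴ = Mᴴ * Nᴴ := by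
    have h := congrArg conjTranspose hMN
    simpa [Matrix.conjTranspose_mul] using h
  have hk : k = α + c := by
    rw [hkdef, hc, Complex.add_conj]; all_goals (push_cast; ring)
  have hMH : Mᴴ = Aᴴ + c • 1 := by
    simp [hMdef, hc]
  have hNH : Nᴴ = Aᴴ - α • 1 := by
    simp [hNdef, hc]
  have hp : M * (B * Bᴴ) * Mᴴ - N * (B * Bᴴ) * Nᴴ
      = k • (A * (B * Bᴴ)) + k • ((B * Bᴴ) * Aᴴ) := by
    generalize B * Bᴴ = P
    rw [hMdef, hNdef, hMH, hNH, hk]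
    simp only [mul_add, add_mul, mul_sub, sub_mul, mul_smul_comm,
      smul_mul_assoc, smul_smul, one_mul, mul_one, add_smul, smul_sub, smul_add]
    all_goals rw [mul_comm c α]
    all_goals abel
  have hC : Cayley A α = N * M⁻¹ := rfl
  have hCH : (Cayley A α)ᴴ = (Mᴴ)⁻¹ * Nᴴ := by
    rw [hC, Matrix.conjTranspose_mul, hinvH]
  have hx : Xnext = N * M⁻¹ * Xprev * ((Mᴴ)⁻¹ * Nᴴ)
      - k • (M⁻¹ * (B * Bᴴ) * (Mᴴ)⁻¹) := by
    rw [hstep, hCH, hC, hinvH, Matrix.mul_assoc (M⁻¹) B Bᴴ]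
  have main := adi_aux A Aᴴ M M⁻¹ Mᴴ (Mᴴ)⁻¹ N Nᴴ Xprev Xnext (B * Bᴴ) k
    h1 h2 h1H h2H hAM hAMH hMN hMNH hAN hANH hp hx
  rw [hR, hR, hCH, hC]
  exact main
end

section
/- After j steps of the ADI iteration starting from X₀, the residual satisfies R(X_j) = M_j R(X₀) M_j*, where M_j = ∏_{i=1}^{j} C(A, α_i). -/
open Matrix

section Helpers

variable {n s : ℕ}

private lemma commute_inv {M N : Matrix (Fin n) (Fin n) ℂ} (h : IsUnit M)
    (hc : M * N = N * M) : M⁻¹ * N = N * M⁻¹ := by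
  have hd := (Matrix.isUnit_iff_isUnit_det M).mp h
  have h1 : M * M⁻¹ = 1 := Matrix.mul_nonsing_inv M hd
  have h2 : M⁻¹ * M = 1 := Matrix.nonsing_inv_mul M hd
  calc M⁻¹ * N = M⁻¹ * N * (M * M⁻¹) := by rw [h1, mul_one]
    _ = M⁻¹ * (N * M) * M⁻¹ := by simp only [Matrix.mul_assoc]
    _ = M⁻¹ * (M * N) * M⁻¹ := by rw [hc]
    _ = (M⁻¹ * M) * N * M⁻¹ := by simp only [Matrix.mul_assoc]
    _ = N * M⁻¹ := by rw [h2, one_mul]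

private lemma comm_shift (A : Matrix (Fin n) (Fin n) ℂ) (c d : ℂ) :
    (A + c • 1) * (A + d • 1) = (A + d • 1) * (A + c • 1) := by
  simp [add_mul, mul_add, smul_mul_assoc, mul_smul_comm, smul_smul]
  ring_nf
  module

private lemma cayley_commute (A : Matrix (Fin n) (Fin n) ℂ) (a b : ℂ)
    (ha : IsUnit (A + a • (1 : Matrix (Fin n) (Fin n) ℂ)))
    (hb : IsUnit (A + b • (1 : Matrix (Fin n) (Fin n) ℂ))) :
    Cayley A a * Cayley A b = Cayley A b * Cayley A a := by
  unfold Cayley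
  set Ta := A - (starRingEnd ℂ a) • 1 with hTa
  set Tb := A - (starRingEnd ℂ b) • 1 with hTb
  set Sa := A + a • (1 : Matrix (Fin n) (Fin n) ℂ) with hSa
  set Sb := A + b • (1 : Matrix (Fin n) (Fin n) ℂ) with hSb
  have hTT : Ta * Tb = Tb * Ta := by
    have := comm_shift A (-(starRingEnd ℂ a)) (-(starRingEnd ℂ b))
    simpa [hTa, hTb, sub_eq_add_neg, neg_smul] using this
  have hTaSb : Sb * Ta = Ta * Sb := by
    have := comm_shift A b (-(starRingEnd ℂ a))
    simpa [hSb, hTa, sub_eq_add_neg, neg_smul] using this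
  have hTbSa : Sa * Tb = Tb * Sa := by
    have := comm_shift A a (-(starRingEnd ℂ b))
    simpa [hSa, hTb, sub_eq_add_neg, neg_smul] using this
  have hSS : Sa * Sb = Sb * Sa := comm_shift A a b
  have hPaTb : Sa⁻¹ * Tb = Tb * Sa⁻¹ := commute_inv ha hTbSa
  have hPbTa : Sb⁻¹ * Ta = Ta * Sb⁻¹ := commute_inv hb hTaSb
  have hPaSb : Sa⁻¹ * Sb = Sb * Sa⁻¹ := commute_inv ha hSS
  have hPbPa : Sb⁻¹ * Sa = Sa * Sb⁻¹ := commute_inv hb hSS.symm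
  have hPP : Sa⁻¹ * Sb⁻¹ = Sb⁻¹ * Sa⁻¹ := commute_inv ha hPbPa.symm
  calc Ta * Sa⁻¹ * (Tb * Sb⁻¹) = Ta * (Sa⁻¹ * Tb) * Sb⁻¹ := by simp only [Matrix.mul_assoc]
    _ = Ta * (Tb * Sa⁻¹) * Sb⁻¹ := by rw [hPaTb]
    _ = (Ta * Tb) * (Sa⁻¹ * Sb⁻¹) := by simp only [Matrix.mul_assoc]
    _ = (Tb * Ta) * (Sb⁻¹ * Sa⁻¹) := by rw [hTT, hPP]
    _ = Tb * (Ta * Sb⁻¹) * Sa⁻¹ := by simp only [Matrix.mul_assoc]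
    _ = Tb * (Sb⁻¹ * Ta) * Sa⁻¹ := by rw [← hPbTa]
    _ = Tb * Sb⁻¹ * (Ta * Sa⁻¹) := by simp only [Matrix.mul_assoc]

private lemma adi_step (A : Matrix (Fin n) (Fin n) ℂ) (B : Matrix (Fin n) (Fin s) ℂ)
    (a : ℂ) (hinv : IsUnit (A + a • (1 : Matrix (Fin n) (Fin n) ℂ)))
    (X : Matrix (Fin n) (Fin n) ℂ) :
    A * (Cayley A a * X * (Cayley A a)ᴴ - ((2 * a.re : ℝ) : ℂ) •
        ((A + a • 1)⁻¹ * B * Bᴴ * ((A + a • 1)⁻¹)ᴴ))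
      + (Cayley A a * X * (Cayley A a)ᴴ - ((2 * a.re : ℝ) : ℂ) •
        ((A + a • 1)⁻¹ * B * Bᴴ * ((A + a • 1)⁻¹)ᴴ)) * Aᴴ
      + B * Bᴴ
    = Cayley A a * (A * X + X * Aᴴ + B * Bᴴ) * (Cayley A a)ᴴ := by
  set c : ℂ := ((2 * a.re : ℝ) : ℂ) with hcdef
  have hc : c = a + (starRingEnd ℂ) a := (Complex.add_conj a).symm
  set S := A + a • (1 : Matrix (Fin n) (Fin n) ℂ) with hSdef
  set T := A - (starRingEnd ℂ a) • (1 : Matrix (Fin n) (Fin n) ℂ) with hTdef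
  have hd := (Matrix.isUnit_iff_isUnit_det S).mp hinv
  have hSP : S * S⁻¹ = 1 := Matrix.mul_nonsing_inv S hd
  have hPS : S⁻¹ * S = 1 := Matrix.nonsing_inv_mul S hd
  set P := S⁻¹ with hPdef
  set N := P * B * Bᴴ * Pᴴ with hNdef
  have hC : Cayley A a = T * P := rfl
  -- conjTranspose facts
  have hTH : Tᴴ = Aᴴ - a • 1 := by
    rw [hTdef]; simp [conjTranspose_sub, conjTranspose_smul]
  have hSH : Sᴴ = Aᴴ + (starRingEnd ℂ) a • 1 := by
    rw [hSdef]; simp [conjTranspose_add, conjTranspose_smul]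
  have hPHSH : Pᴴ * Sᴴ = 1 := by
    rw [← conjTranspose_mul, hSP, conjTranspose_one]
  -- A commutes with T, S, P, C
  have hAT : A * T = T * A := by
    rw [hTdef]; simp [mul_sub, sub_mul, mul_smul_comm, smul_mul_assoc]
  have hAS : A * S = S * A := by
    rw [hSdef]; simp [mul_add, add_mul, mul_smul_comm, smul_mul_assoc]
  have hPA : P * A = A * P := commute_inv hinv hAS.symm
  have hAC : A * (Cayley A a) = (Cayley A a) * A := by
    rw [hC]
    calc A * (T * P) = (A * T) * P := by rw [mul_assoc]
      _ = T * (A * P) := by rw [hAT, mul_assoc]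
      _ = T * (P * A) := by rw [hPA]
      _ = (T * P) * A := by rw [mul_assoc]
  have hCHAH : (Cayley A a)ᴴ * Aᴴ = Aᴴ * (Cayley A a)ᴴ := by
    rw [← conjTranspose_mul, ← conjTranspose_mul, hAC]
  -- B * Bᴴ = S * N * Sᴴ
  have hBB : S * N * Sᴴ = B * Bᴴ := by
    rw [hNdef]
    calc S * (P * B * Bᴴ * Pᴴ) * Sᴴ = (S * P) * B * Bᴴ * (Pᴴ * Sᴴ) := by
          simp only [Matrix.mul_assoc]
      _ = B * Bᴴ := by rw [hSP, hPHSH, Matrix.one_mul, Matrix.mul_one]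
  -- key scalar identity
  have hkey : T * N * Tᴴ = S * N * Sᴴ - c • (A * N + N * Aᴴ) := by
    rw [hTH, hSH, hTdef, hSdef, hc]
    simp only [sub_mul, mul_sub, add_mul, mul_add, smul_mul_assoc, mul_smul_comm,
      smul_smul, smul_sub, smul_add, one_mul, mul_one]
    module
  have hCB : Cayley A a * (B * Bᴴ) * (Cayley A a)ᴴ = B * Bᴴ - c • (A * N + N * Aᴴ) := by
    calc Cayley A a * (B * Bᴴ) * (Cayley A a)ᴴ
        = T * (P * B * Bᴴ * Pᴴ) * Tᴴ := by
          rw [hC, conjTranspose_mul]; simp only [Matrix.mul_assoc]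
      _ = T * N * Tᴴ := by rw [hNdef]
      _ = S * N * Sᴴ - c • (A * N + N * Aᴴ) := hkey
      _ = B * Bᴴ - c • (A * N + N * Aᴴ) := by rw [hBB]
  -- put it together
  set C := Cayley A a
  have e1 : A * (C * X * Cᴴ) = C * (A * X) * Cᴴ := by
    calc A * (C * X * Cᴴ) = (A * C) * X * Cᴴ := by simp only [Matrix.mul_assoc]
      _ = (C * A) * X * Cᴴ := by rw [hAC]
      _ = C * (A * X) * Cᴴ := by simp only [Matrix.mul_assoc]
  have e2 : (C * X * Cᴴ) * Aᴴ = C * (X * Aᴴ) * Cᴴ := by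
    calc (C * X * Cᴴ) * Aᴴ = C * X * (Cᴴ * Aᴴ) := by simp only [Matrix.mul_assoc]
      _ = C * X * (Aᴴ * Cᴴ) := by rw [hCHAH]
      _ = C * (X * Aᴴ) * Cᴴ := by simp only [Matrix.mul_assoc]
  calc A * (C * X * Cᴴ - c • N) + (C * X * Cᴴ - c • N) * Aᴴ + B * Bᴴ
      = A * (C * X * Cᴴ) - c • (A * N) + ((C * X * Cᴴ) * Aᴴ - c • (N * Aᴴ)) + B * Bᴴ := by
        rw [mul_sub, sub_mul, mul_smul_comm, smul_mul_assoc]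
    _ = C * (A * X) * Cᴴ + C * (X * Aᴴ) * Cᴴ + (B * Bᴴ - c • (A * N + N * Aᴴ)) := by
        rw [e1, e2]; module
    _ = C * (A * X) * Cᴴ + C * (X * Aᴴ) * Cᴴ + C * (B * Bᴴ) * Cᴴ := by rw [hCB]
    _ = C * (A * X + X * Aᴴ + B * Bᴴ) * Cᴴ := by
        simp only [Matrix.mul_add, Matrix.add_mul, mul_assoc]

end Helpers

theorem adi_residual_product {n s j : ℕ} (A : Matrix (Fin n) (Fin n) ℂ)
    (B : Matrix (Fin n) (Fin s) ℂ) (α : Fin j → ℂ)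
    (hα : ∀ i, (α i).re < 0)
    (hinv : ∀ i, IsUnit (A + α i • (1 : Matrix (Fin n) (Fin n) ℂ)))
    (R : Matrix (Fin n) (Fin n) ℂ → Matrix (Fin n) (Fin n) ℂ)
    (hR : ∀ X, R X = A * X + X * Aᴴ + B * Bᴴ)
    (X : ℕ → Matrix (Fin n) (Fin n) ℂ)
    (hHerm : (X 0).IsHermitian)
    (hstep : ∀ i : Fin j,
      X (i + 1) = Cayley A (α i) * X i * (Cayley A (α i))ᴴ
        - ((2 * (α i).re : ℝ) : ℂ) •
          ((A + α i • 1)⁻¹ * B * Bᴴ * ((A + α i • 1)⁻¹)ᴴ)) :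
    R (X j) = (List.ofFn fun i : Fin j => Cayley A (α i)).prod * R (X 0)
      * ((List.ofFn fun i : Fin j => Cayley A (α i)).prod)ᴴ := by
  induction j with
  | zero => simp
  | succ j ih =>
    have hXj : R (X (j + 1)) = Cayley A (α (Fin.last j)) * R (X j)
        * (Cayley A (α (Fin.last j)))ᴴ := by
      have h := hstep (Fin.last j)
      simp only [Fin.val_last] at h
      rw [hR, hR, h]
      exact adi_step A B (α (Fin.last j)) (hinv (Fin.last j)) (X j)
    have ihj := ih (fun i => α i.castSucc) (fun i => hα _) (fun i => hinv _)
      (fun i => by simpa using hstep i.castSucc)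
    rw [hXj, ihj]
    rw [List.ofFn_succ' (fun i : Fin (j+1) => Cayley A (α i)), List.prod_concat]
    set C := Cayley A (α (Fin.last j))
    set P := (List.ofFn fun i : Fin j => Cayley A (α i.castSucc)).prod with hP
    have hcomm : C * P = P * C := by
      refine (Commute.list_prod_right _ _ fun x hx => ?_).eq
      rw [List.mem_ofFn] at hx
      obtain ⟨i, rfl⟩ := hx
      exact cayley_commute A (α (Fin.last j)) (α i.castSucc)
        (hinv (Fin.last j)) (hinv i.castSucc)
    calc C * (P * R (X 0) * Pᴴ) * Cᴴ
        = (C * P) * R (X 0) * (C * P)ᴴ := by rw [conjTranspose_mul]; simp only [Matrix.mul_assoc]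
      _ = (P * C) * R (X 0) * (P * C)ᴴ := by rw [hcomm]
end

section
/- Let real shifts α₁,…,α_j < 0 generate LR-ADI data with W_j = B + Z_jG_j and AZ_j = Z_jS_j + BG_j*. Then for every p ≥ 1, A^{p−1}W_j ∈ range(K_p(A,B)) + range(Z_j), i.e., there exist M_p ∈ ℂ^{sp×s} with A^{p−1}W_j = K_p(A,B)M_p + Z_j S_j^{p−1} G_j, where K_p(A,B) = [B, AB, …, A^{p−1}B]. -/
open Matrix

lemma krylov_mul_eq_sum {n s p : ℕ} (A : Matrix (Fin n) (Fin n) ℝ)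
    (B : Matrix (Fin n) (Fin s) ℝ) (M : Matrix (Fin p × Fin s) (Fin s) ℝ) :
    (Matrix.of fun r (ic : Fin p × Fin s) => (A ^ (ic.1 : ℕ) * B) r ic.2) * M
      = ∑ i : Fin p, A ^ (i : ℕ) * B * (Matrix.of fun c c' => M (i, c) c') := by
  ext r c'
  simp [Matrix.mul_apply, Matrix.sum_apply, Fintype.sum_prod_type, Finset.sum_mul]

theorem krylov_resfactor_decomposition {n s js : ℕ} (A : Matrix (Fin n) (Fin n) ℝ)
    (B : Matrix (Fin n) (Fin s) ℝ) (W : Matrix (Fin n) (Fin s) ℝ)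
    (Z : Matrix (Fin n) (Fin js) ℝ) (G : Matrix (Fin js) (Fin s) ℝ)
    (S : Matrix (Fin js) (Fin js) ℝ)
    (hW : W = B + Z * G) (hAZ : A * Z = Z * S + B * Gᵀ) :
    ∀ p : ℕ, 1 ≤ p →
      ∃ M : Matrix (Fin p × Fin s) (Fin s) ℝ,
        A ^ (p - 1) * W
          = (Matrix.of fun r (ic : Fin p × Fin s) => (A ^ (ic.1 : ℕ) * B) r ic.2) * M
            + Z * S ^ (p - 1) * G := by
  intro p hp
  induction p, hp using Nat.le_induction with
  | base =>
      refine ⟨Matrix.of fun ic c' => (1 : Matrix (Fin s) (Fin s) ℝ) ic.2 c', ?_⟩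
      rw [krylov_mul_eq_sum]
      simp only [Nat.sub_self, pow_zero, one_mul]
      rw [Fin.sum_univ_one]
      have : (Matrix.of fun c c' =>
          (Matrix.of fun (ic : Fin 1 × Fin s) c' => (1 : Matrix (Fin s) (Fin s) ℝ) ic.2 c')
            ((0 : Fin 1), c) c') = (1 : Matrix (Fin s) (Fin s) ℝ) := by
        ext c c'; simp
      rw [this]
      simp [hW]
  | succ p hp ih =>
      obtain ⟨M, hM⟩ := ih
      refine ⟨Matrix.of fun ic c' =>
        Fin.cases ((Gᵀ * (S ^ (p - 1) * G)) ic.2 c') (fun i' => M (i', ic.2) c') ic.1, ?_⟩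
      have hq : p - 1 + 1 = p := Nat.succ_pred_eq_of_pos hp
      have hpow : A ^ (p + 1 - 1) = A * A ^ (p - 1) := by
        rw [show p + 1 - 1 = (p - 1) + 1 by omega, pow_succ']
      have hSpow : S ^ (p + 1 - 1) = S * S ^ (p - 1) := by
        rw [show p + 1 - 1 = (p - 1) + 1 by omega, pow_succ']
      have hAZ' : ∀ X : Matrix (Fin js) (Fin s) ℝ,
          A * (Z * X) = Z * (S * X) + B * (Gᵀ * X) := by
        intro X
        rw [← Matrix.mul_assoc, hAZ, Matrix.add_mul, Matrix.mul_assoc, Matrix.mul_assoc]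
      rw [krylov_mul_eq_sum, Fin.sum_univ_succ]
      have hblock0 : (Matrix.of fun c c' =>
          (Matrix.of fun (ic : Fin (p+1) × Fin s) c' =>
            Fin.cases ((Gᵀ * (S ^ (p - 1) * G)) ic.2 c') (fun i' => M (i', ic.2) c') ic.1)
            ((0 : Fin (p+1)), c) c') = Gᵀ * (S ^ (p - 1) * G) := by
        ext c c'; simp
      have hblocks : ∀ i : Fin p, (Matrix.of fun c c' =>
          (Matrix.of fun (ic : Fin (p+1) × Fin s) c' =>
            Fin.cases ((Gᵀ * (S ^ (p - 1) * G)) ic.2 c') (fun i' => M (i', ic.2) c') ic.1)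
            (i.succ, c) c') = Matrix.of fun c c' => M (i, c) c' := by
        intro i; ext c c'; simp
      rw [hblock0]
      simp only [hblocks]
      have hsum : ∑ i : Fin p, A ^ ((i.succ : Fin (p+1)) : ℕ) * B *
            (Matrix.of fun c c' => M (i, c) c')
          = A * ((Matrix.of fun r (ic : Fin p × Fin s) => (A ^ (ic.1 : ℕ) * B) r ic.2) * M) := by
        rw [krylov_mul_eq_sum, Matrix.mul_sum]
        refine Finset.sum_congr rfl fun i _ => ?_
        rw [Fin.val_succ, pow_succ']
        simp [Matrix.mul_assoc]
      rw [hsum, hpow, hSpow]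
      rw [Matrix.mul_assoc, hM, Matrix.mul_add, Matrix.mul_assoc Z, hAZ']
      simp only [Fin.val_zero, pow_zero, Matrix.one_mul, Matrix.mul_assoc]
      abel
end

section
/- Consequently, under the LR-ADI relations, the block Krylov subspace inclusion K_p(A, W_j) ⊆ K_p(A, B) + range(Z_j) holds for all p ≥ 1. -/
open Matrix

/-- The block Krylov subspace of order `p` (with block coefficients). -/
def blockKrylov {n s : ℕ} (p : ℕ) (A : Matrix (Fin n) (Fin n) ℝ)
    (W : Matrix (Fin n) (Fin s) ℝ) : Set (Matrix (Fin n) (Fin s) ℝ) :=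
  { X | ∃ Ξ : Fin p → Matrix (Fin s) (Fin s) ℝ, X = ∑ i : Fin p, A ^ (i : ℕ) * W * Ξ i }

private lemma powZ {n s js : ℕ} (A : Matrix (Fin n) (Fin n) ℝ)
    (B : Matrix (Fin n) (Fin s) ℝ)
    (Z : Matrix (Fin n) (Fin js) ℝ) (G : Matrix (Fin js) (Fin s) ℝ)
    (S : Matrix (Fin js) (Fin js) ℝ)
    (hAZ : A * Z = Z * S + B * Gᵀ) :
    ∀ i : ℕ, A ^ i * Z = Z * S ^ i +
      ∑ k ∈ Finset.range i, A ^ k * B * (Gᵀ * S ^ (i - 1 - k)) := by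
  intro i
  induction i with
  | zero => simp
  | succ i ih =>
    have h1 : A ^ (i + 1) * Z = A * (A ^ i * Z) := by
      rw [pow_succ']; exact (Matrix.mul_assoc A (A ^ i) Z)
    rw [h1, ih, Matrix.mul_add, Matrix.mul_sum]
    rw [Finset.sum_range_succ']
    have h2 : A * (Z * S ^ i) = Z * S ^ (i + 1) + B * Gᵀ * S ^ i := by
      rw [← Matrix.mul_assoc, hAZ, Matrix.add_mul, Matrix.mul_assoc, ← pow_succ']
    rw [h2]
    have h3 : ∀ k ∈ Finset.range i,
        A * (A ^ k * B * (Gᵀ * S ^ (i - 1 - k)))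
          = A ^ (k + 1) * B * (Gᵀ * S ^ (i + 1 - 1 - (k + 1))) := by
      intro k hk
      have he : i + 1 - 1 - (k + 1) = i - 1 - k := by omega
      rw [he, pow_succ', Matrix.mul_assoc, Matrix.mul_assoc, Matrix.mul_assoc]
    rw [Finset.sum_congr rfl h3]
    have h4 : (A ^ 0 * B * (Gᵀ * S ^ (i + 1 - 1 - 0))) = B * Gᵀ * S ^ i := by
      simp [Matrix.mul_assoc]
    rw [h4]
    abel

theorem blockKrylov_resfactor_subset {n s js : ℕ} (A : Matrix (Fin n) (Fin n) ℝ)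
    (B : Matrix (Fin n) (Fin s) ℝ) (W : Matrix (Fin n) (Fin s) ℝ)
    (Z : Matrix (Fin n) (Fin js) ℝ) (G : Matrix (Fin js) (Fin s) ℝ)
    (S : Matrix (Fin js) (Fin js) ℝ)
    (hW : W = B + Z * G) (hAZ : A * Z = Z * S + B * Gᵀ) :
    ∀ p : ℕ, 1 ≤ p → ∀ X ∈ blockKrylov p A W,
      ∃ Y ∈ blockKrylov p A B, ∃ C : Matrix (Fin js) (Fin s) ℝ, X = Y + Z * C := by
  intro p _hp X hX
  obtain ⟨Ξ, rfl⟩ := hX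
  -- extend the coefficients to ℕ
  set Ξ' : ℕ → Matrix (Fin s) (Fin s) ℝ := fun k => if h : k < p then Ξ ⟨k, h⟩ else 0 with hΞ'
  -- the new Krylov coefficients for B
  set Θ : ℕ → Matrix (Fin s) (Fin s) ℝ := fun k =>
    Ξ' k + ∑ i ∈ Finset.range p,
      (if k < i then Gᵀ * S ^ (i - 1 - k) * (G * Ξ' i) else 0) with hΘ
  refine ⟨∑ i : Fin p, A ^ (i : ℕ) * B * Θ i, ⟨fun i => Θ i, rfl⟩,
    ∑ i ∈ Finset.range p, S ^ i * (G * Ξ' i), ?_⟩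
  have hX' : ∑ i : Fin p, A ^ (i : ℕ) * W * Ξ i
      = ∑ i ∈ Finset.range p, A ^ i * W * Ξ' i := by
    rw [← Fin.sum_univ_eq_sum_range (fun i => A ^ i * W * Ξ' i) p]
    refine Finset.sum_congr rfl fun i _ => ?_
    simp [hΞ', i.isLt]
  have hY' : ∑ i : Fin p, A ^ (i : ℕ) * B * Θ i
      = ∑ i ∈ Finset.range p, A ^ i * B * Θ i := by
    rw [← Fin.sum_univ_eq_sum_range (fun i => A ^ i * B * Θ i) p]
  rw [hX', hY']
  -- expand W
  have expand : ∀ i ∈ Finset.range p,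
      A ^ i * W * Ξ' i = A ^ i * B * Ξ' i + Z * (S ^ i * (G * Ξ' i))
        + ∑ k ∈ Finset.range p,
            (if k < i then A ^ k * B * (Gᵀ * S ^ (i - 1 - k) * (G * Ξ' i)) else 0) := by
    intro i hi
    have hip : i < p := Finset.mem_range.mp hi
    have hstep : A ^ i * W * Ξ' i = A ^ i * B * Ξ' i + (A ^ i * Z) * (G * Ξ' i) := by
      rw [hW]; simp [Matrix.mul_add, Matrix.add_mul, Matrix.mul_assoc]
    rw [hstep, powZ A B Z G S hAZ i, Matrix.add_mul, Matrix.sum_mul]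
    have hsub : ∑ k ∈ Finset.range i, A ^ k * B * (Gᵀ * S ^ (i - 1 - k)) * (G * Ξ' i)
        = ∑ k ∈ Finset.range p,
            (if k < i then A ^ k * B * (Gᵀ * S ^ (i - 1 - k) * (G * Ξ' i)) else 0) := by
      rw [← Finset.sum_filter]
      have hfil : Finset.filter (fun k => k < i) (Finset.range p) = Finset.range i := by
        ext k
        simp only [Finset.mem_filter, Finset.mem_range]
        omega
      rw [hfil]
      refine Finset.sum_congr rfl fun k _ => by rw [Matrix.mul_assoc (A ^ k * B)]
    rw [hsub, Matrix.mul_assoc, Matrix.mul_assoc, add_assoc]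
  rw [Finset.sum_congr rfl expand]
  rw [Finset.sum_add_distrib, Finset.sum_add_distrib]
  rw [Finset.sum_comm]
  have hΘsum : ∑ i ∈ Finset.range p, A ^ i * B * Θ i
      = ∑ i ∈ Finset.range p, (A ^ i * B * Ξ' i
          + ∑ k ∈ Finset.range p,
              (if i < k then A ^ i * B * (Gᵀ * S ^ (k - 1 - i) * (G * Ξ' k)) else 0)) := by
    refine Finset.sum_congr rfl fun i _ => ?_
    rw [hΘ, Matrix.mul_add, Matrix.mul_sum]
    congr 1
    refine Finset.sum_congr rfl fun k _ => ?_
    split <;> simp [Matrix.mul_assoc]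
  rw [hΘsum, Finset.sum_add_distrib, Matrix.mul_sum]
  abel
end

section
/- Inverse Krylov version: if additionally A and S_j are invertible, then A⁻¹W_j = A⁻¹B(I_s − G_j*S_j⁻¹G_j) + Z_jS_j⁻¹, and hence A⁻¹W_j ∈ span{A⁻¹B} + range(Z_j). -/
open Matrix

theorem inverse_krylov_resfactor {n s js : ℕ} (A : Matrix (Fin n) (Fin n) ℝ)
    (B : Matrix (Fin n) (Fin s) ℝ) (W : Matrix (Fin n) (Fin s) ℝ)
    (Z : Matrix (Fin n) (Fin js) ℝ) (G : Matrix (Fin js) (Fin s) ℝ)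
    (S : Matrix (Fin js) (Fin js) ℝ)
    (hA : IsUnit A) (hS : IsUnit S)
    (hW : W = B + Z * G) (hAZ : A * Z = Z * S + B * Gᵀ) :
    A⁻¹ * W = A⁻¹ * B * (1 - Gᵀ * S⁻¹ * G) + Z * S⁻¹ * G ∧
      ∃ (Ξ : Matrix (Fin s) (Fin s) ℝ) (Y : Matrix (Fin js) (Fin s) ℝ),
        A⁻¹ * W = A⁻¹ * B * Ξ + Z * Y := by
  have hAd : IsUnit A.det := (Matrix.isUnit_iff_isUnit_det A).mp hA
  have hSd : IsUnit S.det := (Matrix.isUnit_iff_isUnit_det S).mp hS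
  have hA1 : A⁻¹ * A = 1 := Matrix.nonsing_inv_mul A hAd
  have hS1 : S * S⁻¹ = 1 := Matrix.mul_nonsing_inv S hSd
  have hZ : A⁻¹ * Z = Z * S⁻¹ - A⁻¹ * B * Gᵀ * S⁻¹ := by
    have h := congrArg (fun M => A⁻¹ * M * S⁻¹) hAZ
    simp only [Matrix.add_mul, Matrix.mul_add, ← Matrix.mul_assoc] at h
    rw [hA1, Matrix.one_mul] at h
    rw [Matrix.mul_assoc (A⁻¹ * Z) S S⁻¹, hS1, Matrix.mul_one] at h
    rw [h]; abel
  have key : A⁻¹ * W = A⁻¹ * B * (1 - Gᵀ * S⁻¹ * G) + Z * S⁻¹ * G := by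
    rw [hW, Matrix.mul_add, ← Matrix.mul_assoc, hZ]
    simp only [Matrix.mul_sub, Matrix.sub_mul, Matrix.mul_one, Matrix.mul_assoc]
    abel
  exact ⟨key, 1 - Gᵀ * S⁻¹ * G, S⁻¹ * G, by rw [key]; simp [Matrix.mul_assoc]⟩
end
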